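/- Performance difference lemma: for any two policies π and π̃ in a discounted MDP, η(π) = η(π̃) + E_{s∼d^π}E_{a∼π(·|s)}[A^{π̃}(s,a)], where d^π(s) = (1−γ)∑_{t≥0} γ^t P(s_t = s | π) is the normalized discounted state visitation distribution and A^{π̃}(s,a) = Q^{π̃}(s,a) − V^{π̃}(s). -/

import Mathlib

noncomputable section

/-- Trajectory induced by a deterministic policy `π` and transition `T` from state `s`. -/
def traj {S A : Type*} (T : S → A → S) (π : S → A) (s : S) : ℕ → S
  | 0 => s
  | t + 1 => T (traj T π s t) (π (traj T π s t))

/-- Discounted value function of a deterministic policy in a deterministic MDP. -/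
def Vpi {S A : Type*} (T : S → A → S) (r : S → A → ℝ) (γ : ℝ) (π : S → A) (s : S) : ℝ :=
  ∑' t : ℕ, γ ^ t * r (traj T π s t) (π (traj T π s t))

/-- Action-value function. -/
def Qpi {S A : Type*} (T : S → A → S) (r : S → A → ℝ) (γ : ℝ) (π : S → A) (s : S) (a : A) : ℝ :=
  r s a + γ * Vpi T r γ π (T s a)

/-- Advantage function. -/
def Api {S A : Type*} (T : S → A → S) (r : S → A → ℝ) (γ : ℝ) (π : S → A) (s : S) (a : A) : ℝ :=
  Qpi T r γ π s a - Vpi T r γ π s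

/-- Expected return under initial distribution `ρ`. -/
def eta {S A : Type*} [Fintype S] (T : S → A → S) (r : S → A → ℝ) (γ : ℝ) (ρ : S → ℝ)
    (π : S → A) : ℝ :=
  ∑ s : S, ρ s * Vpi T r γ π s

/-- Normalized discounted state visitation distribution
`d^π(s) = (1−γ) ∑_t γ^t P(s_t = s | π)`. -/
def dvisit {S A : Type*} [Fintype S] [DecidableEq S] (T : S → A → S) (γ : ℝ) (ρ : S → ℝ)
    (π : S → A) (s : S) : ℝ :=
  (1 - γ) * ∑' t : ℕ, γ ^ t * ∑ s0 : S, ρ s0 * (if traj T π s0 t = s then (1 : ℝ) else 0)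

section Aux
variable {S A : Type*} [Fintype S]

lemma summable_aux (γ : ℝ) (h0 : 0 ≤ γ) (h1 : γ < 1) (g : ℕ → S) (h : S → ℝ) :
    Summable (fun t => γ ^ t * h (g t)) := by
  obtain ⟨M, hM⟩ : ∃ M, ∀ s : S, |h s| ≤ M :=
    ⟨∑ s, |h s|, fun s => Finset.single_le_sum (f := fun s => |h s|)
      (fun _ _ => abs_nonneg _) (Finset.mem_univ s)⟩
  apply Summable.of_norm_bounded
    ((summable_geometric_of_lt_one h0 h1).mul_right M)
  intro t
  rw [norm_mul, norm_pow, Real.norm_eq_abs, abs_of_nonneg h0, Real.norm_eq_abs]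
  exact mul_le_mul_of_nonneg_left (hM _) (pow_nonneg h0 t)

lemma traj_shift (T : S → A → S) (π : S → A) (s : S) (t : ℕ) :
    traj T π (T s (π s)) t = traj T π s (t + 1) := by
  induction t with
  | zero => rfl
  | succ t ih => simp only [traj, ih]

end Aux


section Aux2
set_option linter.unusedSectionVars false
variable {S A : Type*} [Fintype S]

lemma Vpi_summable (T : S → A → S) (r : S → A → ℝ) {γ : ℝ} (h0 : 0 ≤ γ) (h1 : γ < 1)
    (π : S → A) (s : S) :
    Summable (fun t => γ ^ t * r (traj T π s t) (π (traj T π s t))) :=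
  summable_aux γ h0 h1 (traj T π s) (fun x => r x (π x))

lemma Vpi_bellman (T : S → A → S) (r : S → A → ℝ) {γ : ℝ} (h0 : 0 ≤ γ) (h1 : γ < 1)
    (π : S → A) (s : S) :
    Vpi T r γ π s = r s (π s) + γ * Vpi T r γ π (T s (π s)) := by
  rw [Vpi, Summable.tsum_eq_zero_add (Vpi_summable T r h0 h1 π s)]
  have h₀ : traj T π s 0 = s := rfl
  rw [h₀]
  simp only [pow_zero, one_mul]
  congr 1
  rw [Vpi, ← tsum_mul_left]
  apply tsum_congr
  intro t
  rw [traj_shift]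
  ring

lemma value_diff (T : S → A → S) (r : S → A → ℝ) {γ : ℝ} (h0 : 0 ≤ γ) (h1 : γ < 1)
    (π πt : S → A) (s : S) :
    Vpi T r γ π s - Vpi T r γ πt s
      = ∑' t, γ ^ t * Api T r γ πt (traj T π s t) (π (traj T π s t)) := by
  set g : ℕ → ℝ := fun t => γ ^ t * Vpi T r γ πt (traj T π s t) with hg
  have hgs : Summable g := summable_aux γ h0 h1 _ _
  have hgs' : Summable (fun t => g (t + 1)) := (summable_nat_add_iff 1).mpr hgs
  have hfs := Vpi_summable T r h0 h1 π s
  have key : ∀ t, γ ^ t * Api T r γ πt (traj T π s t) (π (traj T π s t))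
      = γ ^ t * r (traj T π s t) (π (traj T π s t)) + (g (t + 1) - g t) := by
    intro t
    have hstep : traj T π s (t + 1) = T (traj T π s t) (π (traj T π s t)) := rfl
    have hb := Vpi_bellman T r h0 h1 πt (traj T π s t)
    simp only [Api, Qpi, hg, hstep]
    ring
  rw [tsum_congr key, Summable.tsum_add hfs (hgs'.sub hgs), Summable.tsum_sub hgs' hgs]
  have htel : ∑' t, g (t + 1) = (∑' t, g t) - g 0 := by
    rw [Summable.tsum_eq_zero_add hgs]; ring
  have hg0 : g 0 = Vpi T r γ πt s := by simp [hg]; rfl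
  rw [htel, hg0, Vpi]
  ring

end Aux2

/-- Performance difference lemma:
`η(π) = η(π̃) + E_{s∼d^π} E_{a∼π(·|s)}[A^{π̃}(s,a)]` (deterministic finite MDP, with the
visitation expectation normalized by `(1−γ)`, so the advantage term carries a `1/(1−γ)`). -/
theorem stmt11 {S A : Type*} [Fintype S] [DecidableEq S]
    (T : S → A → S) (r : S → A → ℝ) (γ : ℝ) (hγ : γ ∈ Set.Ioo (0 : ℝ) 1)
    (ρ : S → ℝ) (hρnn : ∀ s, 0 ≤ ρ s) (hρ : ∑ s : S, ρ s = 1)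
    (π πt : S → A) :
    eta T r γ ρ π
      = eta T r γ ρ πt
        + (1 - γ)⁻¹ * ∑ s : S, dvisit T γ ρ π s * Api T r γ πt s (π s) := by
  obtain ⟨h0, h1⟩ := hγ
  have h0' : 0 ≤ γ := le_of_lt h0
  set F : S → ℝ := fun x => Api T r γ πt x (π x) with hF
  -- dvisit rewritten with sums swapped
  have hdv : ∀ s : S, dvisit T γ ρ π s
      = (1 - γ) * ∑ s0 : S, ρ s0 * ∑' t : ℕ, γ ^ t * (if traj T π s0 t = s then (1 : ℝ) else 0) := by
    intro s
    rw [dvisit]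
    congr 1
    calc (∑' t : ℕ, γ ^ t * ∑ s0 : S, ρ s0 * (if traj T π s0 t = s then (1 : ℝ) else 0))
        = ∑' t : ℕ, ∑ s0 : S, ρ s0 * (γ ^ t * (if traj T π s0 t = s then (1 : ℝ) else 0)) := by
          apply tsum_congr
          intro t
          rw [Finset.mul_sum]
          apply Finset.sum_congr rfl
          intro s0 _
          ring
      _ = ∑ s0 : S, ∑' t : ℕ, ρ s0 * (γ ^ t * (if traj T π s0 t = s then (1 : ℝ) else 0)) :=
          Summable.tsum_finsetSum (fun s0 _ => ((summable_aux γ h0' h1 (traj T π s0)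
            (fun x => if x = s then (1 : ℝ) else 0)).mul_left (ρ s0)))
      _ = ∑ s0 : S, ρ s0 * ∑' t : ℕ, γ ^ t * (if traj T π s0 t = s then (1 : ℝ) else 0) := by
          apply Finset.sum_congr rfl
          intro s0 _
          rw [tsum_mul_left]
  -- key: inner sum over states reconstructs trajectory sum
  have hinner : ∀ s0 : S,
      ∑ s : S, (∑' t : ℕ, γ ^ t * (if traj T π s0 t = s then (1 : ℝ) else 0)) * F s
        = Vpi T r γ π s0 - Vpi T r γ πt s0 := by
    intro s0
    rw [value_diff T r h0' h1 π πt s0]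
    have : ∀ s : S, (∑' t : ℕ, γ ^ t * (if traj T π s0 t = s then (1 : ℝ) else 0)) * F s
        = ∑' t : ℕ, γ ^ t * ((if traj T π s0 t = s then (1 : ℝ) else 0) * F s) := by
      intro s
      rw [← tsum_mul_right]
      apply tsum_congr; intro t; ring
    simp only [this]
    rw [← Summable.tsum_finsetSum (fun s _ => summable_aux γ h0' h1 (traj T π s0)
      (fun x => (if x = s then (1 : ℝ) else 0) * F s))]
    apply tsum_congr
    intro t
    rw [← Finset.mul_sum]
    congr 1
    rw [Finset.sum_eq_single (traj T π s0 t)]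
    · simp [hF]
    · intro b _ hb; simp [Ne.symm hb]
    · intro h; exact absurd (Finset.mem_univ _) h
  have hmain : ∑ s : S, dvisit T γ ρ π s * F s
      = (1 - γ) * ∑ s0 : S, ρ s0 * (Vpi T r γ π s0 - Vpi T r γ πt s0) := by
    calc ∑ s : S, dvisit T γ ρ π s * F s
        = ∑ s : S, ∑ s0 : S, (1 - γ) * (ρ s0 *
            ((∑' t : ℕ, γ ^ t * (if traj T π s0 t = s then (1 : ℝ) else 0)) * F s)) := by
          apply Finset.sum_congr rfl
          intro s _
          rw [hdv s, mul_assoc, Finset.sum_mul, Finset.mul_sum]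
          apply Finset.sum_congr rfl
          intro s0 _
          ring
      _ = ∑ s0 : S, ∑ s : S, (1 - γ) * (ρ s0 *
            ((∑' t : ℕ, γ ^ t * (if traj T π s0 t = s then (1 : ℝ) else 0)) * F s)) :=
          Finset.sum_comm
      _ = (1 - γ) * ∑ s0 : S, ρ s0 * (Vpi T r γ π s0 - Vpi T r γ πt s0) := by
          rw [Finset.mul_sum]
          apply Finset.sum_congr rfl
          intro s0 _
          rw [← hinner s0, Finset.mul_sum, Finset.mul_sum]
  -- conclude
  have hne : (1 - γ : ℝ) ≠ 0 := by linarith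
  rw [show (∑ s : S, dvisit T γ ρ π s * Api T r γ πt s (π s)) = ∑ s : S, dvisit T γ ρ π s * F s from rfl,
    hmain, eta, eta]
  rw [← mul_assoc, inv_mul_cancel₀ hne, one_mul, ← Finset.sum_add_distrib]
  apply Finset.sum_congr rfl
  intro s _
  ring
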